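/- If X is a Hermitian matrix with trace zero, then its Hilbert–Schmidt (Frobenius) norm is at most 1/√2 times its trace norm: ‖X‖₂ ≤ (1/√2)‖X‖₁. -/

import Mathlib

open Matrix Kronecker BigOperators
open scoped ComplexOrder

/-- The positive semidefinite square root of a positive semidefinite matrix
(removed from Mathlib; restored with its former definition). -/
noncomputable def Matrix.PosSemidef.sqrt {n : Type*} [Fintype n] [DecidableEq n]
    {A : Matrix n n ℂ} (hA : A.PosSemidef) : Matrix n n ℂ :=
  hA.1.eigenvectorUnitary.1 * diagonal ((↑) ∘ (√·) ∘ hA.1.eigenvalues) *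
  (star hA.1.eigenvectorUnitary : Matrix n n ℂ)

noncomputable def traceNorm {n : Type*} [Fintype n] [DecidableEq n] (X : Matrix n n ℂ) : ℝ :=
  ((Matrix.posSemidef_conjTranspose_mul_self X).sqrt.trace).re

noncomputable def hsNorm {n : Type*} [Fintype n] (X : Matrix n n ℂ) : ℝ :=
  Real.sqrt ((Xᴴ * X).trace.re)

noncomputable def singularValues {n : Type*} [Fintype n] [DecidableEq n] (Y : Matrix n n ℂ) :
    n → ℝ :=
  fun i => Real.sqrt ((Matrix.posSemidef_conjTranspose_mul_self Y).1.eigenvalues i)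

/-- Partial transpose on the first tensor factor. -/
def ptransp {d k : ℕ} (X : Matrix (Fin d × Fin k) (Fin d × Fin k) ℂ) :
    Matrix (Fin d × Fin k) (Fin d × Fin k) ℂ :=
  fun p q => X (q.1, p.2) (p.1, q.2)

/-- Partial trace over the first tensor factor. -/
noncomputable def ptraceH {d k : ℕ} (X : Matrix (Fin d × Fin k) (Fin d × Fin k) ℂ) :
    Matrix (Fin k) (Fin k) ℂ :=
  fun j j' => ∑ i, X (i, j) (i, j')

def vec {d : ℕ} (A : Matrix (Fin d) (Fin d) ℂ) : Fin d × Fin d → ℂ := fun p => A p.1 p.2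

/-- Outer product |v⟩⟨w|. -/
def outer {n : Type*} (v w : n → ℂ) : Matrix n n ℂ := fun i j => v i * star (w j)

/-- The swap operator F(e_i ⊗ e_j) = e_j ⊗ e_i. -/
def swapOp (d : ℕ) : Matrix (Fin d × Fin d) (Fin d × Fin d) ℂ :=
  fun p q => if p.1 = q.2 ∧ p.2 = q.1 then 1 else 0

/-- Blockwise action of Φ ⊗ id on operators on H ⊗ K. -/
def tensorExt {d k : ℕ} (Φ : Matrix (Fin d) (Fin d) ℂ → Matrix (Fin d) (Fin d) ℂ)
    (Z : Matrix (Fin d × Fin k) (Fin d × Fin k) ℂ) :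
    Matrix (Fin d × Fin k) (Fin d × Fin k) ℂ :=
  fun p q => Φ (fun a b => Z (a, p.2) (b, q.2)) p.1 q.1

/-- Diamond norm (stabilized at ancilla dimension d). -/
noncomputable def diamondNorm {d : ℕ}
    (Φ : Matrix (Fin d) (Fin d) ℂ → Matrix (Fin d) (Fin d) ℂ) : ℝ :=
  ⨆ ρ : {ρ : Matrix (Fin d × Fin d) (Fin d × Fin d) ℂ // ρ.PosSemidef ∧ ρ.trace = 1},
    traceNorm (tensorExt Φ ρ.1)

/-- Key real inequality: if a finite family of reals sums to zero, then the ℓ² norm is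
at most `1/√2` times the ℓ¹ norm. -/
lemma aux_sqrt_sum_sq_le {n : Type*} [Fintype n] (f : n → ℝ)
    (h : ∑ i, f i = 0) :
    Real.sqrt (∑ i, f i ^ 2) ≤ (1 / Real.sqrt 2) * ∑ i, |f i| := by
  classical
  set a : n → ℝ := fun i => max (f i) 0 with ha
  set b : n → ℝ := fun i => max (-f i) 0 with hb
  have hanon : ∀ i ∈ Finset.univ, (0:ℝ) ≤ a i := fun i _ => le_max_right _ _
  have hbnon : ∀ i ∈ Finset.univ, (0:ℝ) ≤ b i := fun i _ => le_max_right _ _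
  have hsub : ∀ i, a i - b i = f i := by
    intro i
    rcases le_total 0 (f i) with hi | hi
    · simp only [ha, hb, max_eq_left hi, max_eq_right (neg_nonpos.mpr hi), sub_zero]
    · simp only [ha, hb, max_eq_right hi, max_eq_left (neg_nonneg.mpr hi), zero_sub, neg_neg]
  have habs : ∀ i, |f i| = a i + b i := by
    intro i
    rcases le_total 0 (f i) with hi | hi
    · rw [abs_of_nonneg hi]
      simp only [ha, hb, max_eq_left hi, max_eq_right (neg_nonpos.mpr hi), add_zero]
    · rw [abs_of_nonpos hi]
      simp only [ha, hb, max_eq_right hi, max_eq_left (neg_nonneg.mpr hi), zero_add]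
  have hsq : ∀ i, f i ^ 2 = a i ^ 2 + b i ^ 2 := by
    intro i
    rcases le_total 0 (f i) with hi | hi
    · simp only [ha, hb, max_eq_left hi, max_eq_right (neg_nonpos.mpr hi)]
      ring
    · simp only [ha, hb, max_eq_right hi, max_eq_left (neg_nonneg.mpr hi)]
      ring
  have hab : ∑ i, a i = ∑ i, b i := by
    have : ∑ i, (a i - b i) = 0 := by simp only [hsub]; exact h
    rw [Finset.sum_sub_distrib] at this; linarith
  have hA : ∑ i, a i ^ 2 ≤ (∑ i, a i) ^ 2 := Finset.sum_sq_le_sq_sum_of_nonneg hanon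
  have hB : ∑ i, b i ^ 2 ≤ (∑ i, b i) ^ 2 := Finset.sum_sq_le_sq_sum_of_nonneg hbnon
  have hS : ∑ i, |f i| = 2 * ∑ i, a i := by
    simp only [habs, Finset.sum_add_distrib, ← hab]; ring
  have hfs : ∑ i, f i ^ 2 = ∑ i, a i ^ 2 + ∑ i, b i ^ 2 := by
    simp only [hsq, Finset.sum_add_distrib]
  have h2 : Real.sqrt 2 > 0 := by positivity
  have hrhs : (0:ℝ) ≤ (1 / Real.sqrt 2) * ∑ i, |f i| := by
    apply mul_nonneg (by positivity)
    exact Finset.sum_nonneg fun i _ => abs_nonneg _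
  have hmain : ∑ i, f i ^ 2 ≤ ((1 / Real.sqrt 2) * ∑ i, |f i|) ^ 2 := by
    have hs2 : Real.sqrt 2 ^ 2 = 2 := Real.sq_sqrt (by norm_num)
    have : ((1 / Real.sqrt 2) * ∑ i, |f i|) ^ 2 = (∑ i, |f i|) ^ 2 / 2 := by
      rw [mul_pow, div_pow, one_pow, hs2]; ring
    rw [this, hS, hfs, ← hab] at *
    nlinarith [hA, hB]
  calc Real.sqrt (∑ i, f i ^ 2) ≤ Real.sqrt (((1 / Real.sqrt 2) * ∑ i, |f i|) ^ 2) :=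
        Real.sqrt_le_sqrt hmain
    _ = (1 / Real.sqrt 2) * ∑ i, |f i| := Real.sqrt_sq hrhs

open scoped MatrixOrder in
lemma psd_sqrt_eq_cfc_sqrt {n : Type*} [Fintype n] [DecidableEq n]
    {A : Matrix n n ℂ} (hA : A.PosSemidef) : hA.sqrt = CFC.sqrt A := by
  rw [CFC.sqrt_eq_cfc, cfc_nnreal_eq_real _ A hA.nonneg, hA.1.cfc_eq]
  simp only [IsHermitian.cfc, Matrix.PosSemidef.sqrt]
  congr 3
  funext i
  simp [Real.coe_sqrt, Real.coe_toNNReal', hA.eigenvalues_nonneg i]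

open scoped MatrixOrder in
lemma eq_psd_sqrt_of_sq_eq {n : Type*} [Fintype n] [DecidableEq n]
    {A B : Matrix n n ℂ} (hB : B.PosSemidef) (hA : A.PosSemidef) (h : B ^ 2 = A) :
    B = hA.sqrt := by
  rw [psd_sqrt_eq_cfc_sqrt]
  exact (CFC.sqrt_unique (by rw [← pow_two]; exact h) hB.nonneg).symm

theorem traceless_hermitian_hs_le_trace {n : Type*} [Fintype n] [DecidableEq n]
    (X : Matrix n n ℂ) (hX : X.IsHermitian) (htr : X.trace = 0) :
    hsNorm X ≤ (1 / Real.sqrt 2) * traceNorm X := by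
  classical
  set u : Matrix n n ℂ := (hX.eigenvectorUnitary : Matrix n n ℂ) with hu_def
  set ev : n → ℝ := hX.eigenvalues with hev
  have huu : star u * u = 1 := Matrix.mem_unitaryGroup_iff'.mp hX.eigenvectorUnitary.2
  have hspec : X = u * diagonal ((↑) ∘ ev) * star u := hX.spectral_theorem
  have key : ∀ v : n → ℂ, (u * diagonal v * star u).trace = ∑ i, v i := by
    intro v
    rw [Matrix.trace_mul_cycle, huu, Matrix.one_mul, Matrix.trace_diagonal]
  have hmulconj : ∀ v w : n → ℂ,
      (u * diagonal v * star u) * (u * diagonal w * star u)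
        = u * diagonal (fun i => v i * w i) * star u := by
    intro v w
    have h1 : star u * (u * (diagonal w * star u)) = diagonal w * star u := by
      rw [← Matrix.mul_assoc, huu, Matrix.one_mul]
    simp only [Matrix.mul_assoc, h1, ← Matrix.diagonal_mul_diagonal]
  have hdiag1 : (fun i => (Complex.ofReal ∘ ev) i * (Complex.ofReal ∘ ev) i)
      = (fun i => ((ev i ^ 2 : ℝ) : ℂ)) := by
    funext i
    simp only [Function.comp_apply]
    push_cast
    ring
  have hXX : Xᴴ * X = u * diagonal (fun i => ((ev i ^ 2 : ℝ) : ℂ)) * star u := by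
    rw [hX.eq]
    conv_lhs => rw [hspec]
    rw [hmulconj, hdiag1]
  -- the positive-semidefinite square root of Xᴴ * X
  set B : Matrix n n ℂ := u * diagonal (fun i => ((|ev i| : ℝ) : ℂ)) * star u with hB
  have hBpsd : B.PosSemidef := by
    have hd : (diagonal (fun i => ((|ev i| : ℝ) : ℂ))).PosSemidef := by
      rw [Matrix.posSemidef_diagonal_iff]
      intro i
      exact_mod_cast Complex.zero_le_real.mpr (abs_nonneg (ev i))
    exact hd.mul_mul_conjTranspose_same u
  have hdiag2 : (fun i => ((|ev i| : ℝ) : ℂ) * ((|ev i| : ℝ) : ℂ))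
      = (fun i => ((ev i ^ 2 : ℝ) : ℂ)) := by
    funext i
    rw [← Complex.ofReal_mul, abs_mul_abs_self, ← pow_two]
  have hBsq : B ^ 2 = Xᴴ * X := by
    rw [pow_two, hB, hmulconj, hdiag2, hXX]
  have hsqrt : B = (Matrix.posSemidef_conjTranspose_mul_self X).sqrt :=
    eq_psd_sqrt_of_sq_eq hBpsd _ hBsq
  have htrace_norm : traceNorm X = ∑ i, |ev i| := by
    rw [traceNorm, ← hsqrt, hB, key]
    rw [Complex.re_sum]
    simp
  have hhs : hsNorm X = Real.sqrt (∑ i, ev i ^ 2) := by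
    rw [hsNorm, hXX, key, Complex.re_sum]
    simp [← Complex.ofReal_pow]
  have hsum0 : ∑ i, ev i = 0 := by
    have h1 : X.trace = ∑ i, ((ev i : ℝ) : ℂ) := by
      conv_lhs => rw [hspec]
      rw [key]
      rfl
    rw [htr] at h1
    have h2 := congrArg Complex.re h1
    simpa [Complex.re_sum] using h2.symm
  rw [hhs, htrace_norm]
  exact aux_sqrt_sum_sq_le ev hsum0
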